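/- Let X≥0 have continuous distribution function F with m(α)=E[X^α]∈(0,∞) for some α>0, and suppose that for a fixed y>0, x^{α+1}(F(x+y)-F(x))→0 as x→∞. Then the Kendall renewal function R(x)=2/(1-G(x))-(1-F(x))/(1-G(x))^2 satisfies (R(x+y)-R(x))/x^{α-1} → 2αy/m(α) as x→∞, where G is the Williamson transform of F with parameter α. -/

import Mathlib

open MeasureTheory Filter Topology Real Set

set_option maxHeartbeats 1600000 in
theorem stmt18 {Ω : Type*} [MeasurableSpace Ω] (μ : Measure Ω) [IsProbabilityMeasure μ]
    (X : Ω → ℝ) (hX : Measurable X) (hXnn : ∀ ω, 0 ≤ X ω)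
    (α : ℝ) (hα : 0 < α)
    (hint : Integrable (fun ω => X ω ^ α) μ)
    (hm : 0 < ∫ ω, X ω ^ α ∂μ)
    (F G R : ℝ → ℝ)
    (hF : ∀ x, F x = (μ {ω | X ω ≤ x}).toReal)
    (hFc : Continuous F)
    (hG : ∀ x > 0, G x = ∫ ω in {ω | X ω ≤ x}, (1 - (X ω / x) ^ α) ∂μ)
    (hR : ∀ x > 0, R x = 2 / (1 - G x) - (1 - F x) / (1 - G x) ^ 2)
    (y : ℝ) (hy : 0 < y)
    (htail : Tendsto (fun x => x ^ (α + 1) * (F (x + y) - F x)) atTop (𝓝 0)) :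
    Tendsto (fun x => (R (x + y) - R x) / x ^ (α - 1)) atTop
      (𝓝 (2 * α * y / ∫ ω, X ω ^ α ∂μ)) := by
  set m : ℝ := ∫ ω, X ω ^ α ∂μ with hm_def
  have hmne : m ≠ 0 := ne_of_gt hm
  have hmeas : ∀ x : ℝ, MeasurableSet {ω | X ω ≤ x} := fun x => hX measurableSet_Iic
  set S : ℝ → ℝ := fun x => ∫ ω in {ω | X ω ≤ x}, X ω ^ α ∂μ with hS_def
  have hXa_nn : ∀ ω, 0 ≤ X ω ^ α := fun ω => rpow_nonneg (hXnn ω) α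
  -- S tends to m
  have hSm : Tendsto S atTop (𝓝 m) := by
    have h := tendsto_integral_filter_of_dominated_convergence
      (μ := μ) (l := atTop) (f := fun ω => X ω ^ α)
      (F := fun (x : ℝ) ω => Set.indicator {ω | X ω ≤ x} (fun ω => X ω ^ α) ω)
      (bound := fun ω => X ω ^ α)
      (Eventually.of_forall fun x =>
        ((hint.aestronglyMeasurable).indicator (hmeas x)))
      (Eventually.of_forall fun x => ae_of_all μ fun ω => by
        rw [Real.norm_eq_abs, abs_of_nonneg (Set.indicator_nonneg (fun ω _ => hXa_nn ω) ω)]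
        by_cases hω : ω ∈ {ω | X ω ≤ x}
        · rw [Set.indicator_of_mem hω]
        · rw [Set.indicator_of_notMem hω]; exact hXa_nn ω)
      hint
      (ae_of_all μ fun ω => by
        refine tendsto_const_nhds.congr' ?_
        filter_upwards [eventually_ge_atTop (X ω)] with x hx
        exact (Set.indicator_of_mem (show ω ∈ {ω | X ω ≤ x} from hx) (fun ω => X ω ^ α)).symm)
    refine h.congr fun x => ?_
    rw [integral_indicator (hmeas x)]
  -- tail integral identity
  have htail_int : ∀ x : ℝ, (∫ ω in {ω | X ω ≤ x}ᶜ, X ω ^ α ∂μ) = m - S x := by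
    intro x
    have h1 := integral_add_compl (hmeas x) hint
    have h2 : S x = ∫ ω in {ω | X ω ≤ x}, X ω ^ α ∂μ := rfl
    have h3 : m = ∫ ω, X ω ^ α ∂μ := hm_def
    linarith [h1]
  -- 1 - F x = μ (compl) .toReal
  have hFle1 : ∀ x, F x ≤ 1 := by
    intro x
    rw [hF]
    have : μ {ω | X ω ≤ x} ≤ 1 := prob_le_one
    simpa using ENNReal.toReal_mono (by simp) this
  have hFcompl : ∀ x : ℝ, 1 - F x = (μ ({ω | X ω ≤ x}ᶜ)).toReal := by
    intro x
    rw [prob_compl_eq_one_sub (hmeas x), hF,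
      ENNReal.toReal_sub_of_le prob_le_one (by simp)]
    simp
  -- b := x^α (1 - F x) → 0
  have hb : Tendsto (fun x => x ^ α * (1 - F x)) atTop (𝓝 0) := by
    have hub : ∀ᶠ x in atTop, x ^ α * (1 - F x) ≤ m - S x := by
      filter_upwards [eventually_gt_atTop (0:ℝ)] with x hx
      rw [← htail_int x, hFcompl]
      have h1 : (∫ ω in {ω | X ω ≤ x}ᶜ, (x ^ α) ∂μ) = (μ ({ω | X ω ≤ x}ᶜ)).toReal * x ^ α := by
        rw [setIntegral_const]; simp [smul_eq_mul, measureReal_def]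
      rw [mul_comm, ← h1]
      refine setIntegral_mono_on (integrableOn_const (measure_ne_top μ _))
        (hint.integrableOn) (hmeas x).compl ?_
      intro ω hω
      have : x < X ω := lt_of_not_ge hω
      exact rpow_le_rpow hx.le this.le hα.le
    have hlb : ∀ᶠ x in atTop, 0 ≤ x ^ α * (1 - F x) := by
      filter_upwards [eventually_gt_atTop (0:ℝ)] with x hx
      have h1 := hFle1 x
      have h2 : (0:ℝ) ≤ x ^ α := (rpow_pos_of_pos hx α).le
      nlinarith
    have hms : Tendsto (fun t => m - S t) atTop (𝓝 (m - m)) :=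
      (tendsto_const_nhds (x := m)).sub hSm
    rw [sub_self] at hms
    exact squeeze_zero' hlb hub hms
  -- G identity
  have hGid : ∀ x : ℝ, 0 < x → G x = F x - S x / x ^ α := by
    intro x hx
    have hxa : (0:ℝ) < x ^ α := rpow_pos_of_pos hx α
    rw [hG x hx]
    have heq : ∀ ω, (1 : ℝ) - (X ω / x) ^ α = 1 - X ω ^ α / x ^ α := by
      intro ω; rw [div_rpow (hXnn ω) hx.le]
    have h1 : (∫ ω in {ω | X ω ≤ x}, (1 - (X ω / x) ^ α) ∂μ)
        = ∫ ω in {ω | X ω ≤ x}, (1 - X ω ^ α / x ^ α) ∂μ := by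
      refine integral_congr_ae (ae_of_all _ fun ω => heq ω)
    rw [h1, integral_sub (integrableOn_const (s := {ω | X ω ≤ x}) (C := (1:ℝ)) (measure_ne_top μ _))
      ((hint.div_const _).integrableOn), integral_div, setIntegral_const]
    rw [hF]
    simp [smul_eq_mul, hS_def, measureReal_def]
  -- a := x^α (1 - G x) → m
  have ha : Tendsto (fun x => x ^ α * (1 - G x)) atTop (𝓝 m) := by
    have : ∀ᶠ x in atTop, x ^ α * (1 - F x) + S x = x ^ α * (1 - G x) := by
      filter_upwards [eventually_gt_atTop (0:ℝ)] with x hx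
      have hxa : (x:ℝ) ^ α ≠ 0 := (rpow_pos_of_pos hx α).ne'
      rw [hGid x hx]
      field_simp
      ring
    refine Tendsto.congr' this ?_
    simpa using hb.add hSm
  -- S monotone
  have hSmono : ∀ x : ℝ, S x ≤ S (x + y) := by
    intro x
    refine setIntegral_mono_set hint.integrableOn (ae_of_all _ fun ω => hXa_nn ω)
      (ae_of_all _ fun ω (hω : X ω ≤ x) => le_trans hω (by linarith))
  -- ΔS ≤ (x+y)^α ΔF
  have hDS : ∀ x : ℝ, 0 < x → S (x + y) - S x ≤ (x + y) ^ α * (F (x + y) - F x) := by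
    intro x hx
    have hxy : (0:ℝ) < x + y := by linarith
    set A : Set Ω := {ω | X ω ≤ x + y} ∩ {ω | X ω ≤ x}ᶜ with hA_def
    have hAmeas : MeasurableSet A := (hmeas (x+y)).inter (hmeas x).compl
    have hunion : {ω | X ω ≤ x} ∪ A = {ω | X ω ≤ x + y} := by
      ext ω; simp only [Set.mem_union, Set.mem_inter_iff, Set.mem_compl_iff, Set.mem_setOf_eq, hA_def]
      constructor
      · rintro (h | ⟨h, _⟩) <;> [linarith; exact h]
      · intro h; by_cases h' : X ω ≤ x
        · exact Or.inl h'
        · exact Or.inr ⟨h, h'⟩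
    have hdisj : Disjoint {ω | X ω ≤ x} A := by
      rw [Set.disjoint_iff]
      rintro ω ⟨h1, _, h2⟩; exact h2 h1
    have hSsplit : S (x + y) = S x + ∫ ω in A, X ω ^ α ∂μ := by
      rw [hS_def]
      simp only
      rw [← hunion, setIntegral_union hdisj hAmeas hint.integrableOn hint.integrableOn]
    have hAint : (∫ ω in A, X ω ^ α ∂μ) ≤ (μ A).toReal * (x + y) ^ α := by
      have : (∫ ω in A, ((x + y) ^ α) ∂μ) = (μ A).toReal * (x + y) ^ α := by
        rw [setIntegral_const]; simp [smul_eq_mul, measureReal_def]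
      rw [← this]
      refine setIntegral_mono_on hint.integrableOn
        (integrableOn_const (measure_ne_top μ _)) hAmeas ?_
      intro ω hω
      exact rpow_le_rpow (hXnn ω) hω.1 hα.le
    have hmuA : (μ A).toReal = F (x + y) - F x := by
      have hsub : {ω | X ω ≤ x} ⊆ {ω | X ω ≤ x + y} := fun ω (h : X ω ≤ x) => by
        simp only [Set.mem_setOf_eq]; linarith
      have : μ A = μ {ω | X ω ≤ x + y} - μ {ω | X ω ≤ x} := by
        rw [hA_def, Set.inter_comm, ← Set.diff_eq_compl_inter]
        exact measure_diff hsub (hmeas x).nullMeasurableSet (measure_ne_top μ _)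
      rw [this, ENNReal.toReal_sub_of_le (measure_mono hsub) (measure_ne_top μ _), hF, hF]
    calc S (x + y) - S x = ∫ ω in A, X ω ^ α ∂μ := by linarith [hSsplit]
      _ ≤ (μ A).toReal * (x + y) ^ α := hAint
      _ = (x + y) ^ α * (F (x + y) - F x) := by rw [hmuA]; ring
  -- t2 limit : x (1 - (x/(x+y))^α) → α y
  have hT2 : Tendsto (fun x => x * (1 - (x / (x + y)) ^ α)) atTop (𝓝 (α * y)) := by
    have hder : HasDerivAt (fun t : ℝ => t ^ α) α 1 := by
      have := Real.hasDerivAt_rpow_const (x := (1:ℝ)) (p := α) (Or.inl one_ne_zero)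
      simpa using this
    have hslope : Tendsto (slope (fun t : ℝ => t ^ α) 1) (𝓝[≠] 1) (𝓝 α) :=
      hasDerivAt_iff_tendsto_slope.mp hder
    have hφ : Tendsto (fun x : ℝ => x / (x + y)) atTop (𝓝[≠] 1) := by
      refine tendsto_nhdsWithin_of_tendsto_nhds_of_eventually_within _ ?_ ?_
      · have h1 : Tendsto (fun x : ℝ => x / (x + y)) atTop (𝓝 1) := by
          have : ∀ᶠ x : ℝ in atTop, (1 + y / x)⁻¹ = x / (x + y) := by
            filter_upwards [eventually_gt_atTop (0:ℝ)] with x hx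
            rw [eq_div_iff (by positivity)]
            field_simp
          refine Tendsto.congr' this ?_
          have h2 : Tendsto (fun x : ℝ => 1 + y / x) atTop (𝓝 (1 + 0)) :=
            (tendsto_const_nhds (x := (1:ℝ))).add
              ((tendsto_const_nhds (x := y)).div_atTop tendsto_id)
          rw [add_zero] at h2
          simpa using h2.inv₀ (by norm_num)
        exact h1
      · filter_upwards [eventually_gt_atTop (0:ℝ)] with x hx
        simp only [Set.mem_compl_iff, Set.mem_singleton_iff]
        intro h
        rw [div_eq_one_iff_eq (by positivity)] at h
        linarith
    have hcomp : Tendsto (fun x : ℝ => slope (fun t : ℝ => t ^ α) 1 (x / (x + y)) * (y * (x / (x + y))))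
        atTop (𝓝 (α * (y * 1))) := by
      refine Tendsto.mul (hslope.comp hφ) ?_
      exact tendsto_const_nhds.mul (hφ.mono_right nhdsWithin_le_nhds)
    rw [mul_one] at hcomp
    refine hcomp.congr' ?_
    filter_upwards [eventually_gt_atTop (0:ℝ)] with x hx
    have hxy : (0:ℝ) < x + y := by linarith
    have hne : x / (x + y) - 1 ≠ 0 := by
      rw [sub_ne_zero]
      intro h
      rw [div_eq_one_iff_eq hxy.ne'] at h
      linarith
    have hxyne : x + y ≠ 0 := hxy.ne'
    have ht : x / (x + y) - 1 = -(y / (x + y)) := by field_simp; ring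
    rw [slope_def_field, one_rpow, ht]
    have hy0 : y ≠ 0 := hy.ne'
    generalize (x / (x + y)) ^ α = sA
    rw [div_neg, neg_mul, neg_eq_iff_eq_neg]
    rw [div_mul_eq_mul_div, div_eq_iff (by positivity : y / (x + y) ≠ 0)]
    field_simp
    ring
  -- t3 → 0 and ΔG limit
  have hc : Tendsto (fun x => x ^ (α + 1) * (G (x + y) - G x)) atTop (𝓝 (α * y * m)) := by
    have ht3 : Tendsto (fun x => x ^ (α + 1) * (S (x + y) - S x) / (x + y) ^ α) atTop (𝓝 0) := by
      refine squeeze_zero' ?_ ?_ htail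
      · filter_upwards [eventually_gt_atTop (0:ℝ)] with x hx
        have hxy : (0:ℝ) < x + y := by linarith
        have h0 := hSmono x
        have h1 : (0:ℝ) < x ^ (α+1) := rpow_pos_of_pos hx _
        have h2 : (0:ℝ) < (x+y) ^ α := rpow_pos_of_pos hxy _
        exact div_nonneg (mul_nonneg h1.le (by linarith)) h2.le
      · filter_upwards [eventually_gt_atTop (0:ℝ)] with x hx
        have hxy : (0:ℝ) < x + y := by linarith
        have h1 : (0:ℝ) < x ^ (α+1) := rpow_pos_of_pos hx _
        have h2 : (0:ℝ) < (x+y) ^ α := rpow_pos_of_pos hxy _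
        rw [div_le_iff₀ h2]
        calc x ^ (α+1) * (S (x + y) - S x) ≤ x ^ (α+1) * ((x+y) ^ α * (F (x+y) - F x)) :=
              mul_le_mul_of_nonneg_left (hDS x hx) h1.le
          _ = x ^ (α + 1) * (F (x + y) - F x) * (x + y) ^ α := by ring
    have hmain : Tendsto (fun x => x ^ (α+1) * (F (x+y) - F x)
        + (x * (1 - (x / (x + y)) ^ α)) * S x
        - x ^ (α + 1) * (S (x + y) - S x) / (x + y) ^ α) atTop (𝓝 (0 + α * y * m - 0)) :=
      ((htail.add (hT2.mul hSm)).sub ht3)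
    rw [zero_add, sub_zero] at hmain
    refine hmain.congr' ?_
    filter_upwards [eventually_gt_atTop (0:ℝ)] with x hx
    have hxy : (0:ℝ) < x + y := by linarith
    have hxa : (0:ℝ) < x ^ α := rpow_pos_of_pos hx α
    have hxya : (0:ℝ) < (x+y) ^ α := rpow_pos_of_pos hxy α
    have hx0 : x ≠ 0 := hx.ne'
    have hxa0 : x ^ α ≠ 0 := hxa.ne'
    have hxya0 : (x+y) ^ α ≠ 0 := hxya.ne'
    rw [hGid x hx, hGid (x+y) hxy]
    rw [Real.rpow_add hx, rpow_one, div_rpow hx.le hxy.le]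
    field_simp
    ring
  -- auxiliary limits
  have ha' : Tendsto (fun x => (x + y) ^ α * (1 - G (x + y))) atTop (𝓝 m) :=
    ha.comp (tendsto_atTop_add_const_right atTop y tendsto_id)
  have hr : Tendsto (fun x => ((x + y) / x) ^ α) atTop (𝓝 1) := by
    have h1 : Tendsto (fun x : ℝ => (x + y) / x) atTop (𝓝 1) := by
      have : ∀ᶠ x : ℝ in atTop, 1 + y / x = (x + y) / x := by
        filter_upwards [eventually_gt_atTop (0:ℝ)] with x hx
        field_simp
      refine Tendsto.congr' this ?_
      have h2 : Tendsto (fun x : ℝ => 1 + y / x) atTop (𝓝 (1 + 0)) :=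
        (tendsto_const_nhds (x := (1:ℝ))).add
          ((tendsto_const_nhds (x := y)).div_atTop tendsto_id)
      rw [add_zero] at h2
      exact h2
    have hcont : ContinuousAt (fun t : ℝ => t ^ α) 1 :=
      Real.continuousAt_rpow_const 1 α (Or.inl one_ne_zero)
    have := hcont.tendsto.comp h1
    simpa [Function.comp_def] using this
  -- final assembly
  set a : ℝ → ℝ := fun x => x ^ α * (1 - G x) with ha_def
  set a' : ℝ → ℝ := fun x => (x + y) ^ α * (1 - G (x + y)) with ha'_def
  set b : ℝ → ℝ := fun x => x ^ α * (1 - F x) with hb_def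
  set c : ℝ → ℝ := fun x => x ^ (α + 1) * (G (x + y) - G x) with hc_def
  set d : ℝ → ℝ := fun x => x ^ (α + 1) * (F (x + y) - F x) with hd_def
  set r : ℝ → ℝ := fun x => ((x + y) / x) ^ α with hr_def
  have hΦ : Tendsto (fun x => 2 * r x * c x / (a x * a' x)
      - r x * c x * b x * (a' x + r x * a x) / ((a x) ^ 2 * (a' x) ^ 2)
      + d x * (r x) ^ 2 / (a' x) ^ 2) atTop
      (𝓝 (2 * 1 * (α * y * m) / (m * m) - 1 * (α * y * m) * 0 * (m + 1 * m) / (m ^ 2 * m ^ 2)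
        + 0 * 1 ^ 2 / m ^ 2)) := by
    refine Tendsto.add (Tendsto.sub ?_ ?_) ?_
    · exact (((tendsto_const_nhds.mul hr).mul hc).div (ha.mul ha') (mul_ne_zero hmne hmne))
    · exact ((((hr.mul hc).mul hb).mul (ha'.add (hr.mul ha))).div
        ((ha.pow 2).mul (ha'.pow 2)) (mul_ne_zero (pow_ne_zero 2 hmne) (pow_ne_zero 2 hmne)))
    · exact ((htail.mul (hr.pow 2)).div (ha'.pow 2) (pow_ne_zero 2 hmne))
  have hval : (2 * 1 * (α * y * m) / (m * m) - 1 * (α * y * m) * 0 * (m + 1 * m) / (m ^ 2 * m ^ 2)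
      + 0 * 1 ^ 2 / m ^ 2) = 2 * α * y / m := by
    field_simp
    ring
  rw [hval] at hΦ
  refine hΦ.congr' ?_
  filter_upwards [eventually_gt_atTop (0:ℝ), ha.eventually_ne hmne, ha'.eventually_ne hmne]
    with x hx hax hax'
  have hxy : (0:ℝ) < x + y := by linarith
  have hxa : (0:ℝ) < x ^ α := rpow_pos_of_pos hx α
  have hxya : (0:ℝ) < (x+y) ^ α := rpow_pos_of_pos hxy α
  have hGx : 1 - G x ≠ 0 := by
    intro h; apply hax; rw [ha_def]; simp [h]
  have hGxy : 1 - G (x + y) ≠ 0 := by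
    intro h; apply hax'; rw [ha'_def]; simp [h]
  have hx0 : x ≠ 0 := hx.ne'
  have hxa0 : x ^ α ≠ 0 := hxa.ne'
  have hxya0 : (x+y) ^ α ≠ 0 := hxya.ne'
  rw [hR x hx, hR (x+y) hxy]
  simp only [ha_def, ha'_def, hb_def, hc_def, hd_def, hr_def]
  rw [Real.rpow_add hx, Real.rpow_sub hx, rpow_one, div_rpow hxy.le hx.le]
  field_simp
  ring
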